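/- arXiv:2508.15460 — 2 statements merged into one kernel-verified Lean document; each statement's English description precedes it below -/
import Mathlib

section
/- Let f be a probability density on T³ × ℝ³ with finite second velocity moments and u ∈ L²(T³;ℝ³), with v_c := ∬ v f dx dv, u_c := ∫ u dx (unit-volume torus). Define E := (1/2)∬ |v-v_c|² f dx dv + (1/2)∫ |u-u_c|² dx + (1/4)|u_c - v_c|². Then E ≤ ∬ |u-v|² f dx dv + 3 ∬ |u-u_c|² f dx dv + (1/2)∫ |u-u_c|² dx. -/
open MeasureTheory
open scoped RealInnerProductSpace

noncomputable section

abbrev T3 := AddCircle (1 : ℝ) × AddCircle (1 : ℝ) × AddCircle (1 : ℝ)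
abbrev E3 := EuclideanSpace ℝ (Fin 3)

lemma key_ineq (a b c : E3) : (1/2)*‖b‖^2 + (1/4)*‖c‖^2
    ≤ ‖a+c+b‖^2 + (7/3)*‖a‖^2 - 2*⟪c,b⟫ := by
  have h1 : ‖a+c+b‖^2 = ‖a+c‖^2 + 2*⟪a+c,b⟫ + ‖b‖^2 := norm_add_sq_real (a+c) b
  have h2 : ‖a+c‖^2 = ‖a‖^2 + 2*⟪a,c⟫ + ‖c‖^2 := norm_add_sq_real a c
  have h3 : ⟪a+c,b⟫ = ⟪a,b⟫ + ⟪c,b⟫ := inner_add_left a c b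
  have hab : |⟪a,b⟫| ≤ ‖a‖*‖b‖ := abs_real_inner_le_norm a b
  have hac : |⟪a,c⟫| ≤ ‖a‖*‖c‖ := abs_real_inner_le_norm a c
  have hab' := neg_le_of_abs_le hab
  have hac' := neg_le_of_abs_le hac
  nlinarith [sq_nonneg (2*‖a‖ - ‖b‖), sq_nonneg (4*‖a‖ - 3*‖c‖)]

lemma key_ineq' (a b c : E3) (t : ℝ) (ht : 0 ≤ t) :
    (1/2)*(‖b‖^2*t) + (1/4)*(‖c‖^2*t)
      ≤ ‖a+c+b‖^2*t + (7/3)*(‖a‖^2*t) - 2*(⟪c,b⟫*t) := by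
  have h := mul_le_mul_of_nonneg_right (key_ineq a b c) ht
  nlinarith [h]


lemma norm_sub_sq_le (a b : E3) : ‖a - b‖^2 ≤ 2*‖a‖^2 + 2*‖b‖^2 := by
  have h := norm_sub_sq_real a b
  have h2 := abs_real_inner_le_norm a b
  nlinarith [sq_nonneg (‖a‖ - ‖b‖), neg_le_of_abs_le h2]

theorem modulated_energy_bound
    (f : T3 × E3 → ℝ) (u : T3 → E3) (v_c u_c : E3) (E : ℝ)
    (hf_nn : ∀ z, 0 ≤ f z)
    (hf_int : Integrable f)
    (hf_mass : ∫ z, f z = 1)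
    (hmom1 : Integrable (fun z : T3 × E3 => f z • z.2))
    (hmom2 : Integrable (fun z : T3 × E3 => ‖z.2‖^2 * f z))
    (hu_int : Integrable u)
    (hu_sq : Integrable (fun x : T3 => ‖u x‖^2))
    (huf_sq : Integrable (fun z : T3 × E3 => ‖u z.1‖^2 * f z))
    (huf : Integrable (fun z : T3 × E3 => f z • u z.1))
    (hvc : v_c = ∫ z : T3 × E3, f z • z.2)
    (huc : u_c = ∫ x : T3, u x)
    (hE : E = (1/2) * (∫ z : T3 × E3, ‖z.2 - v_c‖^2 * f z)
        + (1/2) * (∫ x : T3, ‖u x - u_c‖^2)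
        + (1/4) * ‖u_c - v_c‖^2) :
    E ≤ (∫ z : T3 × E3, ‖u z.1 - z.2‖^2 * f z)
        + 3 * (∫ z : T3 × E3, ‖u z.1 - u_c‖^2 * f z)
        + (1/2) * (∫ x : T3, ‖u x - u_c‖^2) := by
  -- measurability facts
  have hf_m : AEStronglyMeasurable f volume := hf_int.aestronglyMeasurable
  have hu_m : AEStronglyMeasurable (fun z : T3 × E3 => u z.1) volume := by
    rw [MeasureTheory.Measure.volume_eq_prod]
    exact hu_int.aestronglyMeasurable.comp_fst
  have hsnd_m : AEStronglyMeasurable (fun z : T3 × E3 => z.2) volume :=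
    measurable_snd.aestronglyMeasurable
  -- integrability of auxiliary functions
  have h_normvf : Integrable (fun z : T3 × E3 => ‖z.2‖ * f z) := by
    have := hmom1.norm
    apply this.congr
    filter_upwards with z
    simp [norm_smul, abs_of_nonneg (hf_nn z), mul_comm]
  have h_normuf : Integrable (fun z : T3 × E3 => ‖u z.1‖ * f z) := by
    have := huf.norm
    apply this.congr
    filter_upwards with z
    simp [norm_smul, abs_of_nonneg (hf_nn z), mul_comm]
  -- D := ‖u - v‖² f
  have hD : Integrable (fun z : T3 × E3 => ‖u z.1 - z.2‖^2 * f z) := by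
    refine Integrable.mono' ((huf_sq.const_mul 2).add ((hmom2.const_mul 2)))
      (((hu_m.sub hsnd_m).norm.pow 2).mul hf_m) ?_
    filter_upwards with z
    have h1 : ‖u z.1 - z.2‖^2 ≤ 2*‖u z.1‖^2 + 2*‖z.2‖^2 := norm_sub_sq_le _ _
    have h2 : 0 ≤ ‖u z.1 - z.2‖^2 * f z := mul_nonneg (sq_nonneg _) (hf_nn z)
    rw [Real.norm_of_nonneg h2]
    have := mul_le_mul_of_nonneg_right h1 (hf_nn z)
    simpa [mul_add, add_mul, mul_assoc] using this
  -- G := ‖u - u_c‖² f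
  have hG : Integrable (fun z : T3 × E3 => ‖u z.1 - u_c‖^2 * f z) := by
    refine Integrable.mono' ((huf_sq.const_mul 2).add ((hf_int.const_mul (2*‖u_c‖^2))))
      (((hu_m.sub aestronglyMeasurable_const).norm.pow 2).mul hf_m) ?_
    filter_upwards with z
    have h1 : ‖u z.1 - u_c‖^2 ≤ 2*‖u z.1‖^2 + 2*‖u_c‖^2 := norm_sub_sq_le _ _
    have h2 : 0 ≤ ‖u z.1 - u_c‖^2 * f z := mul_nonneg (sq_nonneg _) (hf_nn z)
    rw [Real.norm_of_nonneg h2]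
    have := mul_le_mul_of_nonneg_right h1 (hf_nn z)
    simpa [mul_add, add_mul, mul_assoc, mul_comm, mul_left_comm] using this
  -- A := ‖v - v_c‖² f
  have hA : Integrable (fun z : T3 × E3 => ‖z.2 - v_c‖^2 * f z) := by
    refine Integrable.mono' ((hmom2.const_mul 2).add ((hf_int.const_mul (2*‖v_c‖^2))))
      (((hsnd_m.sub aestronglyMeasurable_const).norm.pow 2).mul hf_m) ?_
    filter_upwards with z
    have h1 : ‖z.2 - v_c‖^2 ≤ 2*‖z.2‖^2 + 2*‖v_c‖^2 := norm_sub_sq_le _ _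
    have h2 : 0 ≤ ‖z.2 - v_c‖^2 * f z := mul_nonneg (sq_nonneg _) (hf_nn z)
    rw [Real.norm_of_nonneg h2]
    have := mul_le_mul_of_nonneg_right h1 (hf_nn z)
    simpa [mul_add, add_mul, mul_assoc, mul_comm, mul_left_comm] using this
  -- I := ⟪u_c - v_c, v_c - z.2⟫ f
  have hIvec : Integrable (fun z : T3 × E3 => f z • (v_c - z.2)) := by
    have : (fun z : T3 × E3 => f z • (v_c - z.2))
        = fun z => f z • v_c - f z • z.2 := by
      funext z; rw [smul_sub]
    rw [this]
    exact (hf_int.smul_const v_c).sub hmom1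
  have hI : Integrable (fun z : T3 × E3 => ⟪u_c - v_c, v_c - z.2⟫ * f z) := by
    have := hIvec.inner_const (𝕜 := ℝ) (u_c - v_c)
    apply this.congr
    filter_upwards with z
    rw [real_inner_smul_left, real_inner_comm, mul_comm]
  -- the cross term integrates to zero
  have hIzero : ∫ z : T3 × E3, ⟪u_c - v_c, v_c - z.2⟫ * f z = 0 := by
    have h1 : ∀ z : T3 × E3, ⟪u_c - v_c, v_c - z.2⟫ * f z
        = ⟪u_c - v_c, f z • (v_c - z.2)⟫ := by
      intro z; rw [real_inner_smul_right]; ring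
    simp_rw [h1]
    rw [integral_inner hIvec]
    have : (∫ z : T3 × E3, f z • (v_c - z.2)) = 0 := by
      have h2 : (fun z : T3 × E3 => f z • (v_c - z.2))
          = fun z => f z • v_c - f z • z.2 := by funext z; rw [smul_sub]
      rw [h2, integral_sub (hf_int.smul_const v_c) hmom1, integral_smul_const,
        hf_mass, ← hvc, one_smul, sub_self]
    rw [this, inner_zero_right]
  -- constant * f integrates to the constant
  have hCf : ∫ z : T3 × E3, ‖u_c - v_c‖^2 * f z = ‖u_c - v_c‖^2 := by
    rw [integral_const_mul, hf_mass, mul_one]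
  -- integrable pieces with explicit constants
  have hCfint : Integrable (fun z : T3 × E3 => (1/4) * (‖u_c - v_c‖^2 * f z)) := by
    refine (hf_int.const_mul ((1/4) * ‖u_c - v_c‖^2)).congr ?_
    filter_upwards with z; ring
  have hRint : Integrable (fun z : T3 × E3 =>
      (1/2)*(‖z.2 - v_c‖^2 * f z) + (1/4)*(‖u_c - v_c‖^2 * f z)) :=
    (hA.const_mul (1/2)).add hCfint
  have hLint : Integrable (fun z : T3 × E3 =>
      ‖u z.1 - z.2‖^2 * f z + (7/3)*(‖u z.1 - u_c‖^2 * f z)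
        - 2*(⟪u_c - v_c, v_c - z.2⟫ * f z)) :=
    (hD.add (hG.const_mul (7/3))).sub (hI.const_mul 2)
  -- the main integral inequality
  have hmain : ∫ z : T3 × E3, ((1/2)*(‖z.2 - v_c‖^2 * f z) + (1/4)*(‖u_c - v_c‖^2 * f z))
      ≤ ∫ z : T3 × E3, (‖u z.1 - z.2‖^2 * f z + (7/3)*(‖u z.1 - u_c‖^2 * f z)
        - 2*(⟪u_c - v_c, v_c - z.2⟫ * f z)) := by
    refine integral_mono hRint hLint ?_
    intro z
    have h := key_ineq' (u z.1 - u_c) (v_c - z.2) (u_c - v_c) (f z) (hf_nn z)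
    have habc : (u z.1 - u_c) + (u_c - v_c) + (v_c - z.2) = u z.1 - z.2 := by abel
    have hnb : ‖z.2 - v_c‖ = ‖v_c - z.2‖ := norm_sub_rev _ _
    rw [habc] at h
    simp only [hnb]
    linarith
  -- compute the two sides
  have hR : ∫ z : T3 × E3, ((1/2)*(‖z.2 - v_c‖^2 * f z) + (1/4)*(‖u_c - v_c‖^2 * f z))
      = (1/2)*(∫ z : T3 × E3, ‖z.2 - v_c‖^2 * f z) + (1/4)*‖u_c - v_c‖^2 := by
    rw [integral_add (hA.const_mul (1/2)) hCfint, integral_const_mul, integral_const_mul, hCf]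
  have hL : ∫ z : T3 × E3, (‖u z.1 - z.2‖^2 * f z + (7/3)*(‖u z.1 - u_c‖^2 * f z)
        - 2*(⟪u_c - v_c, v_c - z.2⟫ * f z))
      = (∫ z : T3 × E3, ‖u z.1 - z.2‖^2 * f z)
        + (7/3)*(∫ z : T3 × E3, ‖u z.1 - u_c‖^2 * f z) := by
    have h1 : Integrable (fun z : T3 × E3 =>
        ‖u z.1 - z.2‖^2 * f z + (7/3)*(‖u z.1 - u_c‖^2 * f z)) :=
      hD.add (hG.const_mul (7/3))
    have h2 : Integrable (fun z : T3 × E3 =>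
        (2:ℝ)*(⟪u_c - v_c, v_c - z.2⟫ * f z)) := hI.const_mul 2
    rw [integral_sub h1 h2, integral_add hD (hG.const_mul (7/3)),
      integral_const_mul, integral_const_mul, hIzero, mul_zero, sub_zero]
  rw [hR, hL] at hmain
  have hGnn : 0 ≤ ∫ z : T3 × E3, ‖u z.1 - u_c‖^2 * f z :=
    integral_nonneg fun z => mul_nonneg (sq_nonneg _) (hf_nn z)
  rw [hE]
  linarith

end
end

section
/- Let E : [0,∞) → [0,∞) be differentiable, C₀ > 0, p > 2, and suppose that for each t ≥ 0 either E'(t) + C₀E(t)^{p/2} ≤ 0 or E'(t) + C₀E(t) ≤ 0. If additionally E(0) ≤ 1, then E(t) ≤ max(E(0) e^{-C₀ t}, (E(0)^{(2-p)/2} + C₀(p/2-1)t)^{-2/(p-2)}) for all t ≥ 0, and in particular E(t) → 0 as t → ∞. -/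
open Filter

theorem combined_gronwall_decay (E E' : ℝ → ℝ) (p C₀ : ℝ)
    (hp : 2 < p) (hC : 0 < C₀)
    (hE_nonneg : ∀ t, 0 ≤ t → 0 ≤ E t)
    (hE_deriv : ∀ t, 0 ≤ t → HasDerivAt E (E' t) t)
    (hineq : ∀ t, 0 ≤ t →
      E' t + C₀ * E t ^ (p/2 : ℝ) ≤ 0 ∨ E' t + C₀ * E t ≤ 0)
    (hE0 : E 0 ≤ 1) :
    (∀ t, 0 ≤ t →
      E t ≤ max (E 0 * Real.exp (-C₀ * t))
        ((E 0 ^ ((2 - p)/2 : ℝ) + C₀ * (p/2 - 1) * t) ^ (-(2/(p - 2)) : ℝ))) ∧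
    Tendsto E atTop (nhds 0) := by
  have hp2 : (0:ℝ) < p - 2 := by linarith
  set q : ℝ := (2 - p)/2 with hq
  have hqneg : q < 0 := by rw [hq]; linarith
  set c : ℝ := C₀ * (p/2 - 1) with hc
  have hcpos : 0 < c := by rw [hc]; nlinarith
  set r : ℝ := -(2/(p - 2)) with hr
  have hrneg : r < 0 := by
    rw [hr]; simp only [neg_neg, neg_lt_zero]; positivity
  have hqr : q * r = 1 := by
    rw [hq, hr]; field_simp; ring
  -- E' nonpositive
  have hE'le : ∀ t, 0 ≤ t → E' t ≤ 0 := by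
    intro t ht
    rcases hineq t ht with h | h
    · have : 0 ≤ C₀ * E t ^ (p/2:ℝ) :=
        mul_nonneg hC.le (Real.rpow_nonneg (hE_nonneg t ht) _)
      linarith
    · have : 0 ≤ C₀ * E t := mul_nonneg hC.le (hE_nonneg t ht)
      linarith
  have hcont : ContinuousOn E (Set.Ici 0) := fun t ht =>
    ((hE_deriv t ht).differentiableAt.continuousAt).continuousWithinAt
  have hanti : AntitoneOn E (Set.Ici 0) := by
    apply antitoneOn_of_deriv_nonpos (convex_Ici 0) hcont
    · intro x hx
      rw [interior_Ici] at hx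
      exact (hE_deriv x hx.le).differentiableAt.differentiableWithinAt
    · intro x hx
      rw [interior_Ici] at hx
      rw [(hE_deriv x hx.le).deriv]
      exact hE'le x hx.le
  have hEle1 : ∀ t, 0 ≤ t → E t ≤ 1 := fun t ht =>
    le_trans (hanti Set.self_mem_Ici ht ht) hE0
  have hkey : ∀ t, 0 ≤ t → 0 < E t → E' t + C₀ * E t ^ (p/2:ℝ) ≤ 0 := by
    intro t ht hpos
    rcases hineq t ht with h | h
    · exact h
    · have h1 : E t ^ (p/2:ℝ) ≤ E t := by
        calc E t ^ (p/2:ℝ) ≤ E t ^ (1:ℝ) :=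
              Real.rpow_le_rpow_of_exponent_ge hpos (hEle1 t ht) (by linarith)
          _ = E t := Real.rpow_one _
      nlinarith
  -- main bound
  have hbound : ∀ t, 0 ≤ t → E t ≤ max (E 0 * Real.exp (-C₀ * t))
      ((E 0 ^ q + c * t) ^ r) := by
    intro t ht
    rcases (hE_nonneg t ht).eq_or_lt with h0 | hpos
    · exact le_max_of_le_left (h0 ▸ mul_nonneg (hE_nonneg 0 le_rfl) (Real.exp_pos _).le)
    rcases ht.eq_or_lt with ht0 | ht0
    · apply le_max_of_le_left
      rw [← ht0]
      simp
    -- 0 < E t, 0 < t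
    have hEs : ∀ s ∈ Set.Icc (0:ℝ) t, 0 < E s := fun s hs =>
      lt_of_lt_of_le hpos (hanti hs.1 (Set.mem_Ici.mpr (hs.1.trans hs.2)) hs.2)
    have hE0pos : 0 < E 0 := hEs 0 ⟨le_rfl, ht⟩
    -- monotonicity of H s = E s ^ q - c * s on [0, t]
    have hmono : MonotoneOn (fun s => E s ^ q - c * s) (Set.Icc 0 t) := by
      apply monotoneOn_of_deriv_nonneg (convex_Icc 0 t)
      · apply ContinuousOn.sub
        · intro s hs
          exact ((hE_deriv s hs.1).differentiableAt.continuousAt.rpow_const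
            (Or.inl (hEs s hs).ne')).continuousWithinAt
        · exact (continuous_const.mul continuous_id).continuousOn
      · intro x hx
        rw [interior_Icc] at hx
        have hxmem : x ∈ Set.Icc (0:ℝ) t := ⟨hx.1.le, hx.2.le⟩
        have hD : HasDerivAt (fun s => E s ^ q - c * s)
            (E' x * q * E x ^ (q - 1) - c) x := by
          have h1 : HasDerivAt (fun s => E s ^ q) (E' x * q * E x ^ (q - 1)) x :=
            (hE_deriv x hx.1.le).rpow_const (Or.inl (hEs x hxmem).ne')
          exact (h1.sub ((hasDerivAt_id x).const_mul c)).congr_deriv (by ring)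
        exact hD.differentiableAt.differentiableWithinAt
      · intro x hx
        rw [interior_Icc] at hx
        have hxmem : x ∈ Set.Icc (0:ℝ) t := ⟨hx.1.le, hx.2.le⟩
        have hxpos := hEs x hxmem
        have h1 : HasDerivAt (fun s => E s ^ q) (E' x * q * E x ^ (q - 1)) x :=
          (hE_deriv x hx.1.le).rpow_const (Or.inl hxpos.ne')
        have hD : HasDerivAt (fun s => E s ^ q - c * s)
            (E' x * q * E x ^ (q - 1) - c) x := by
          exact (h1.sub ((hasDerivAt_id x).const_mul c)).congr_deriv (by ring)
        rw [hD.deriv]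
        have hEle : E' x ≤ -(C₀ * E x ^ (p/2:ℝ)) := by
          have := hkey x hx.1.le hxpos; linarith
        have hm : q * E x ^ (q - 1) ≤ 0 :=
          mul_nonpos_of_nonpos_of_nonneg hqneg.le (Real.rpow_nonneg hxpos.le _)
        have hmul : (-(C₀ * E x ^ (p/2:ℝ))) * (q * E x ^ (q - 1)) ≤
            E' x * (q * E x ^ (q - 1)) := mul_le_mul_of_nonpos_right hEle hm
        have hcomb : E x ^ (p/2:ℝ) * E x ^ (q - 1) = 1 := by
          rw [← Real.rpow_add hxpos]
          have : p/2 + (q - 1) = 0 := by rw [hq]; ring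
          rw [this, Real.rpow_zero]
        have : (-(C₀ * E x ^ (p/2:ℝ))) * (q * E x ^ (q - 1)) = c := by
          have h2 : (-(C₀ * E x ^ (p/2:ℝ))) * (q * E x ^ (q - 1))
              = -C₀ * q * (E x ^ (p/2:ℝ) * E x ^ (q - 1)) := by ring
          rw [h2, hcomb, hc, hq]; ring
        nlinarith
    have hH : E 0 ^ q + c * t ≤ E t ^ q := by
      have := hmono (Set.left_mem_Icc.mpr ht) (Set.right_mem_Icc.mpr ht) ht
      simp only [mul_zero, sub_zero] at this
      linarith
    have hA : 0 < E 0 ^ q + c * t := by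
      have := Real.rpow_pos_of_pos hE0pos q
      nlinarith
    apply le_max_of_le_right
    calc E t = (E t ^ q) ^ r := by
          rw [← Real.rpow_mul (hE_nonneg t ht), hqr, Real.rpow_one]
      _ ≤ (E 0 ^ q + c * t) ^ r := Real.rpow_le_rpow_of_nonpos hA hH hrneg.le
  constructor
  · exact hbound
  · -- squeeze
    have h1 : Tendsto (fun t => E 0 * Real.exp (-C₀ * t)) atTop (nhds 0) := by
      have hcomp : Tendsto (fun t : ℝ => -C₀ * t) atTop atBot := by
        have : Tendsto (fun t : ℝ => C₀ * t) atTop atTop :=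
          Tendsto.const_mul_atTop hC tendsto_id
        have := tendsto_neg_atTop_atBot.comp this
        simpa [Function.comp_def, neg_mul] using this
      have := (Real.tendsto_exp_atBot.comp hcomp).const_mul (E 0)
      simpa using this
    have h2 : Tendsto (fun t => (E 0 ^ q + c * t) ^ r) atTop (nhds 0) := by
      have hbase : Tendsto (fun t : ℝ => E 0 ^ q + c * t) atTop atTop :=
        tendsto_atTop_add_const_left _ _ (Tendsto.const_mul_atTop hcpos tendsto_id)
      have := (tendsto_rpow_neg_atTop (y := 2/(p - 2)) (by positivity)).comp hbase
      simpa [Function.comp_def, hr] using this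
    have hmax : Tendsto (fun t => max (E 0 * Real.exp (-C₀ * t))
        ((E 0 ^ q + c * t) ^ r)) atTop (nhds 0) := by
      simpa using h1.max h2
    apply tendsto_of_tendsto_of_tendsto_of_le_of_le' tendsto_const_nhds hmax
    · filter_upwards [eventually_ge_atTop (0:ℝ)] with t ht using hE_nonneg t ht
    · filter_upwards [eventually_ge_atTop (0:ℝ)] with t ht using hbound t ht
end
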